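/- arXiv:2006.08118 — 4 statements merged into one kernel-verified Lean document; each statement's English description precedes it below -/
import Mathlib

section
/- Consider the ℤ-module ℤ, its submodule 2ℤ, the homomorphism f : 2ℤ → ℤ defined by f(2n) = 3n, and the inclusion map g : 2ℤ → ℤ. Then (i) there is no ℤ-module homomorphism h : ℤ → ℤ such that f = h ∘ g, and (ii) there is no submodule K of ℤ together with an injective ℤ-module homomorphism h : ℤ → ℤ/K such that h ∘ f = π ∘ g, where π : ℤ → ℤ/K is the natural epimorphism. (Since ℤ is uniform and ℤ² is extending as a ℤ-module, this shows that the hypothesis that U is hollow cannot be removed from the characterization of extending squares.) -/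
/-- Consider the ℤ-module ℤ, its submodule `2ℤ`, the homomorphism `f : 2ℤ → ℤ` with
`f(2n) = 3n`, and the inclusion `g : 2ℤ → ℤ`. Then (i) there is no homomorphism
`h : ℤ → ℤ` with `f = h ∘ g`, and (ii) there are no submodule `K` of `ℤ` and injective
homomorphism `h : ℤ → ℤ/K` with `h ∘ f = π ∘ g`, where `π : ℤ → ℤ/K` is the natural
epimorphism. -/
theorem stmt_11 (f : ↥(Submodule.span ℤ ({2} : Set ℤ)) →ₗ[ℤ] ℤ)
    (hf : ∀ (n : ℤ) (hn : 2 * n ∈ Submodule.span ℤ ({2} : Set ℤ)), f ⟨2 * n, hn⟩ = 3 * n) :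
    (¬ ∃ h : ℤ →ₗ[ℤ] ℤ, f = h ∘ₗ (Submodule.span ℤ ({2} : Set ℤ)).subtype) ∧
    (¬ ∃ (K : Submodule ℤ ℤ) (h : ℤ →ₗ[ℤ] ℤ ⧸ K), Function.Injective h ∧
        h ∘ₗ f = K.mkQ ∘ₗ (Submodule.span ℤ ({2} : Set ℤ)).subtype) := by
  have h2 : (2 : ℤ) ∈ Submodule.span ℤ ({2} : Set ℤ) :=
    Submodule.mem_span_singleton_self 2
  have h2' : (2 * 1 : ℤ) ∈ Submodule.span ℤ ({2} : Set ℤ) := by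
    simpa using h2
  have hf2 : f ⟨2, h2⟩ = 3 := by
    have := hf 1 h2'
    simp only [mul_one] at this ⊢
    convert this using 2
  constructor
  · rintro ⟨h, hh⟩
    have e1 : f ⟨2, h2⟩ = h 2 := by rw [hh]; rfl
    have e2 : h 2 = 2 * h 1 := by
      have : h 2 = h ((2 : ℤ) • 1) := by norm_num
      rw [this, map_smul]; simp [two_mul]
    rw [hf2, e2] at e1
    omega
  · rintro ⟨K, h, hinj, hh⟩
    -- h 3 = mkQ 2
    have e1 : h 3 = K.mkQ 2 := by
      have := LinearMap.congr_fun hh ⟨2, h2⟩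
      simp only [LinearMap.coe_comp, Function.comp_apply, Submodule.subtype_apply] at this
      rw [hf2] at this
      exact this
    obtain ⟨b, hb⟩ := K.mkQ_surjective (h 1)
    have hbk : 3 * b - 2 ∈ K := by
      have : K.mkQ (3 * b) = K.mkQ 2 := by
        rw [← e1]
        calc K.mkQ (3 * b) = (3 : ℤ) • K.mkQ b := by
              rw [← map_smul]; norm_num
          _ = (3 : ℤ) • h 1 := by rw [hb]
          _ = h 3 := by rw [← map_smul]; norm_num
      have := (Submodule.Quotient.eq K).mp this
      simpa using this
    set k : ℤ := 3 * b - 2 with hk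
    have h2k : (2 : ℤ) * k ∈ K := by
      have := K.smul_mem (2 : ℤ) hbk
      simpa using this
    have e3 : h (3 * k) = 0 := by
      calc h (3 * k) = k • h 3 := by rw [← map_smul, smul_eq_mul]; ring_nf
        _ = k • K.mkQ 2 := by rw [e1]
        _ = K.mkQ (2 * k) := by rw [← map_smul, smul_eq_mul]; ring_nf
        _ = 0 := (Submodule.Quotient.mk_eq_zero K).mpr h2k
    have : 3 * k = 0 := hinj (by simpa using e3)
    omega
end

section
/- The ℤ-module ℤ² is extending. -/
/-- A submodule `N` of `M` is *small* (superfluous) in `M` if `N + X ≠ M`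
for every proper submodule `X` of `M`. -/
def IsSmallSubmodule {R M : Type*} [Ring R] [AddCommGroup M] [Module R M]
    (N : Submodule R M) : Prop :=
  ∀ X : Submodule R M, X ≠ ⊤ → N ⊔ X ≠ ⊤

/-- A nonzero module `M` is *hollow* if every proper submodule of `M` is small in `M`. -/
def IsHollowModule (R M : Type*) [Ring R] [AddCommGroup M] [Module R M] : Prop :=
  Nontrivial M ∧ ∀ N : Submodule R M, N ≠ ⊤ → IsSmallSubmodule N

/-- A submodule `N` of `M` is *essential* in `M` if `N ∩ X ≠ 0`
for every nonzero submodule `X` of `M`. -/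
def IsEssentialSubmodule {R M : Type*} [Ring R] [AddCommGroup M] [Module R M]
    (N : Submodule R M) : Prop :=
  ∀ X : Submodule R M, X ≠ ⊥ → N ⊓ X ≠ ⊥

/-- A nonzero module `M` is *uniform* if every nonzero submodule of `M` is essential in `M`. -/
def IsUniformModule (R M : Type*) [Ring R] [AddCommGroup M] [Module R M] : Prop :=
  Nontrivial M ∧ ∀ N : Submodule R M, N ≠ ⊥ → IsEssentialSubmodule N

/-- `X` is a direct summand of `M`. -/
def IsDirectSummand {R M : Type*} [Ring R] [AddCommGroup M] [Module R M]
    (X : Submodule R M) : Prop :=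
  ∃ Y : Submodule R M, IsCompl X Y

/-- A module `M` is *lifting* if for every submodule `N` of `M` there is a direct summand
`X` of `M` with `X ⊆ N` such that `N/X` is small in `M/X`. -/
def IsLiftingModule (R M : Type*) [Ring R] [AddCommGroup M] [Module R M] : Prop :=
  ∀ N : Submodule R M, ∃ X : Submodule R M,
    X ≤ N ∧ IsDirectSummand X ∧ IsSmallSubmodule (N.map X.mkQ)

/-- A module `M` is *extending* if for every submodule `N` of `M` there is a direct summand
`X` of `M` such that `N` is essential in `X`. -/
def IsExtendingModule (R M : Type*) [Ring R] [AddCommGroup M] [Module R M] : Prop :=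
  ∀ N : Submodule R M, ∃ X : Submodule R M,
    IsDirectSummand X ∧ N ≤ X ∧ ∀ Y : Submodule R M, Y ≤ X → Y ≠ ⊥ → N ⊓ Y ≠ ⊥

/-- A module is *uniserial* if its submodules are linearly ordered by inclusion. -/
def IsUniserialModule (R M : Type*) [Ring R] [AddCommGroup M] [Module R M] : Prop :=
  ∀ A B : Submodule R M, A ≤ B ∨ B ≤ A

/-- An internal finite direct sum decomposition `M = ⨁ᵢ Fᵢ`. -/
def IsInternalDirectSum {R M ι : Type*} [Ring R] [AddCommGroup M] [Module R M]
    (F : ι → Submodule R M) : Prop :=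
  (⨆ i, F i) = ⊤ ∧ ∀ i, Disjoint (F i) (⨆ j ∈ ({i}ᶜ : Set ι), F j)

/-- A module `M` satisfies the *finite internal exchange property* if for any direct
summand `X` of `M` and any finite direct sum decomposition `M = M₁ ⊕ ⋯ ⊕ Mₙ` there are
submodules `Mᵢ' ⊆ Mᵢ` with `M = X ⊕ M₁' ⊕ ⋯ ⊕ Mₙ'`. -/
def SatisfiesFIEP (R M : Type*) [Ring R] [AddCommGroup M] [Module R M] : Prop :=
  ∀ (X : Submodule R M), IsDirectSummand X →
    ∀ (n : ℕ) (Mi : Fin n → Submodule R M), IsInternalDirectSum Mi →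
      ∃ Mi' : Fin n → Submodule R M, (∀ i, Mi' i ≤ Mi i) ∧
        IsInternalDirectSum (fun o : Option (Fin n) => o.elim X Mi')

/-- The ℤ-module ℤ² is extending. -/
theorem stmt_12 : IsExtendingModule ℤ (ℤ × ℤ) := by
  intro N
  set M := ℤ × ℤ
  set X : Submodule ℤ M := Submodule.comap N.mkQ (Submodule.torsion ℤ (M ⧸ N)) with hX
  have hmem : ∀ x : M, x ∈ X ↔ ∃ m : ℤ, m ≠ 0 ∧ m • x ∈ N := by
    intro x
    constructor
    · intro hx
      rw [hX, Submodule.mem_comap] at hx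
      obtain ⟨⟨m, hm⟩, hmx⟩ := hx
      refine ⟨m, nonZeroDivisors.ne_zero hm, ?_⟩
      have h2 : m • N.mkQ x = 0 := by rw [← Submonoid.mk_smul m hm]; exact hmx
      rw [← map_smul] at h2
      rwa [← LinearMap.mem_ker, Submodule.ker_mkQ] at h2
    · rintro ⟨m, hm0, hmN⟩
      rw [hX, Submodule.mem_comap]
      refine ⟨⟨m, mem_nonZeroDivisors_of_ne_zero hm0⟩, ?_⟩
      have h2 : N.mkQ (m • x) = 0 := by
        rw [← Submodule.ker_mkQ N] at hmN; exact hmN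
      rw [map_smul] at h2
      rw [Submonoid.mk_smul]
      simpa [Submodule.mkQ_apply] using h2
  have hNX : N ≤ X := fun x hx => (hmem x).2 ⟨1, one_ne_zero, by simpa using hx⟩
  have hmkQ : ∀ x : M, X.mkQ x = 0 ↔ x ∈ X := by
    intro x; rw [← LinearMap.mem_ker, Submodule.ker_mkQ]
  -- M ⧸ X is torsion-free
  haveI : NoZeroSMulDivisors ℤ (M ⧸ X) := by
    refine ⟨fun {n q} h => ?_⟩
    by_cases hn : n = 0
    · exact Or.inl hn
    refine Or.inr ?_
    obtain ⟨x, rfl⟩ := X.mkQ_surjective q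
    have hnx : n • x ∈ X := by
      rw [← hmkQ, map_smul]; exact h
    obtain ⟨m, hm0, hmN⟩ := (hmem _).1 hnx
    rw [hmkQ]
    exact (hmem x).2 ⟨m * n, mul_ne_zero hm0 hn, by rwa [mul_smul]⟩
  haveI : Module.Finite ℤ (M ⧸ X) := Module.Finite.quotient ℤ X
  haveI : Module.Free ℤ (M ⧸ X) := Module.free_of_finite_type_torsion_free'
  obtain ⟨g, hg⟩ := Module.projective_lifting_property X.mkQ LinearMap.id X.mkQ_surjective
  set π : M →ₗ[ℤ] M := LinearMap.id - g ∘ₗ X.mkQ with hπ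
  have hπX : ∀ x : M, π x ∈ X := by
    intro x
    rw [← hmkQ]
    have h1 := LinearMap.congr_fun hg (X.mkQ x)
    simp only [LinearMap.comp_apply, LinearMap.id_apply] at h1
    simp only [hπ, LinearMap.sub_apply, LinearMap.id_apply, LinearMap.comp_apply, map_sub, h1,
      sub_self]
  set f : M →ₗ[ℤ] X := π.codRestrict X hπX with hf
  have hfid : ∀ x : X, f (x : M) = x := by
    rintro ⟨x, hx⟩
    apply Subtype.ext
    simp only [hf, LinearMap.codRestrict_apply, hπ, LinearMap.sub_apply, LinearMap.id_apply,
      LinearMap.comp_apply]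
    rw [(hmkQ x).2 hx, map_zero, sub_zero]
  refine ⟨X, ⟨LinearMap.ker f, LinearMap.isCompl_of_proj hfid⟩, hNX, ?_⟩
  intro Y hYX hY hcon
  obtain ⟨y, hyY, hy0⟩ := Submodule.exists_mem_ne_zero_of_ne_bot hY
  obtain ⟨m, hm0, hmN⟩ := (hmem y).1 (hYX hyY)
  have : m • y ∈ N ⊓ Y := ⟨hmN, Y.smul_mem m hyY⟩
  rw [hcon, Submodule.mem_bot] at this
  exact hy0 ((smul_eq_zero.mp this).resolve_left hm0)
end

section
/- Let p and q be two distinct prime numbers, let ℤ_(p) and ℤ_(q) be the localizations of ℤ at p and q respectively, let R be the ring of matrices [[a, x],[0, b]] with a ∈ ℤ_(p), x ∈ ℚ, b ∈ ℤ_(q), let L be the right ideal of R consisting of matrices [[0, x],[0, y]] with x, y ∈ ℤ_(q), and let U = R/L as a right R-module. Then U is uniserial. -/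
/-- The localization `ℤ_(p)` of `ℤ` at the prime `p`, realized as the subring of `ℚ`
consisting of the fractions `n / d` with `p ∤ d`. -/
def Zloc (p : ℕ) (hp : p.Prime) : Subring ℚ where
  carrier := {x : ℚ | ∃ n d : ℤ, ¬ (p : ℤ) ∣ d ∧ x * d = n}
  zero_mem' := ⟨0, 1, by simpa using (Nat.prime_iff_prime_int.mp hp).not_dvd_one, by norm_num⟩
  one_mem' := ⟨1, 1, by simpa using (Nat.prime_iff_prime_int.mp hp).not_dvd_one, by norm_num⟩
  add_mem' := by
    rintro x y ⟨n1, d1, hd1, h1⟩ ⟨n2, d2, hd2, h2⟩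
    refine ⟨n1 * d2 + n2 * d1, d1 * d2, ?_, ?_⟩
    · intro h
      rcases ((Nat.prime_iff_prime_int.mp hp).dvd_mul.mp h) with h | h
      exacts [hd1 h, hd2 h]
    · push_cast
      push_cast at h1 h2
      calc (x + y) * ((d1 : ℚ) * d2) = (x * d1) * d2 + (y * d2) * d1 := by ring
        _ = (n1 : ℚ) * d2 + (n2 : ℚ) * d1 := by rw [h1, h2]
  neg_mem' := by
    rintro x ⟨n, d, hd, h⟩
    exact ⟨-n, d, hd, by push_cast; linarith⟩
  mul_mem' := by
    rintro x y ⟨n1, d1, hd1, h1⟩ ⟨n2, d2, hd2, h2⟩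
    refine ⟨n1 * n2, d1 * d2, ?_, ?_⟩
    · intro h
      rcases ((Nat.prime_iff_prime_int.mp hp).dvd_mul.mp h) with h | h
      exacts [hd1 h, hd2 h]
    · push_cast
      push_cast at h1 h2
      calc (x * y) * ((d1 : ℚ) * d2) = (x * d1) * (y * d2) := by ring
        _ = (n1 : ℚ) * n2 := by rw [h1, h2]

/-- The triangular matrix ring `[[ℤ_(p), ℚ], [0, ℤ_(q)]]`, as a subring of the `2 × 2`
rational matrices. -/
def TriRing (p q : ℕ) (hp : p.Prime) (hq : q.Prime) :
    Subring (Matrix (Fin 2) (Fin 2) ℚ) where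
  carrier := {A | A 1 0 = 0 ∧ A 0 0 ∈ Zloc p hp ∧ A 1 1 ∈ Zloc q hq}
  zero_mem' := ⟨rfl, (Zloc p hp).zero_mem, (Zloc q hq).zero_mem⟩
  one_mem' := ⟨by simp [Matrix.one_apply], by simpa using (Zloc p hp).one_mem,
    by simpa using (Zloc q hq).one_mem⟩
  add_mem' := by
    rintro A B ⟨hA0, hA1, hA2⟩ ⟨hB0, hB1, hB2⟩
    exact ⟨by simp [hA0, hB0], (Zloc p hp).add_mem hA1 hB1, (Zloc q hq).add_mem hA2 hB2⟩
  neg_mem' := by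
    rintro A ⟨hA0, hA1, hA2⟩
    exact ⟨by simp [hA0], (Zloc p hp).neg_mem hA1, (Zloc q hq).neg_mem hA2⟩
  mul_mem' := by
    rintro A B ⟨hA0, hA1, hA2⟩ ⟨hB0, hB1, hB2⟩
    refine ⟨?_, ?_, ?_⟩
    · simp [Matrix.mul_apply, Fin.sum_univ_two, hA0, hB0]
    · have : (A * B) 0 0 = A 0 0 * B 0 0 + A 0 1 * B 1 0 := by
        simp [Matrix.mul_apply, Fin.sum_univ_two]
      rw [this, hB0, mul_zero, add_zero]
      exact (Zloc p hp).mul_mem hA1 hB1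
    · have : (A * B) 1 1 = A 1 0 * B 0 1 + A 1 1 * B 1 1 := by
        simp [Matrix.mul_apply, Fin.sum_univ_two]
      rw [this, hA0, zero_mul, zero_add]
      exact (Zloc q hq).mul_mem hA2 hB2

/-- The right ideal `L = [[0, ℤ_(q)], [0, ℤ_(q)]]` of `TriRing p q`, as a submodule of the
right module `TriRing p q` over itself. -/
def Lideal (p q : ℕ) (hp : p.Prime) (hq : q.Prime) :
    Submodule (TriRing p q hp hq)ᵐᵒᵖ (TriRing p q hp hq) where
  carrier := {A | (A : Matrix (Fin 2) (Fin 2) ℚ) 0 0 = 0 ∧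
    (A : Matrix (Fin 2) (Fin 2) ℚ) 0 1 ∈ Zloc q hq ∧
    (A : Matrix (Fin 2) (Fin 2) ℚ) 1 1 ∈ Zloc q hq}
  zero_mem' := ⟨rfl, (Zloc q hq).zero_mem, (Zloc q hq).zero_mem⟩
  add_mem' := by
    rintro A B ⟨hA0, hA1, hA2⟩ ⟨hB0, hB1, hB2⟩
    exact ⟨by simp [hA0, hB0], by simpa using (Zloc q hq).add_mem hA1 hB1,
      by simpa using (Zloc q hq).add_mem hA2 hB2⟩
  smul_mem' := by
    rintro r A ⟨hA0, hA1, hA2⟩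
    have hr := r.unop.2
    have hsmul : ((r • A : TriRing p q hp hq) : Matrix (Fin 2) (Fin 2) ℚ) =
        (A : Matrix (Fin 2) (Fin 2) ℚ) * (r.unop : Matrix (Fin 2) (Fin 2) ℚ) := rfl
    refine ⟨?_, ?_, ?_⟩
    · rw [hsmul]
      have : ((A : Matrix (Fin 2) (Fin 2) ℚ) * (r.unop : Matrix (Fin 2) (Fin 2) ℚ)) 0 0 =
          (A : Matrix (Fin 2) (Fin 2) ℚ) 0 0 * (r.unop : Matrix (Fin 2) (Fin 2) ℚ) 0 0 +
          (A : Matrix (Fin 2) (Fin 2) ℚ) 0 1 * (r.unop : Matrix (Fin 2) (Fin 2) ℚ) 1 0 := by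
        simp [Matrix.mul_apply, Fin.sum_univ_two]
      rw [this, hA0, hr.1, zero_mul, mul_zero, add_zero]
    · rw [hsmul]
      have : ((A : Matrix (Fin 2) (Fin 2) ℚ) * (r.unop : Matrix (Fin 2) (Fin 2) ℚ)) 0 1 =
          (A : Matrix (Fin 2) (Fin 2) ℚ) 0 0 * (r.unop : Matrix (Fin 2) (Fin 2) ℚ) 0 1 +
          (A : Matrix (Fin 2) (Fin 2) ℚ) 0 1 * (r.unop : Matrix (Fin 2) (Fin 2) ℚ) 1 1 := by
        simp [Matrix.mul_apply, Fin.sum_univ_two]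
      rw [this, hA0, zero_mul, zero_add]
      exact (Zloc q hq).mul_mem hA1 hr.2.2
    · rw [hsmul]
      have : ((A : Matrix (Fin 2) (Fin 2) ℚ) * (r.unop : Matrix (Fin 2) (Fin 2) ℚ)) 1 1 =
          (A : Matrix (Fin 2) (Fin 2) ℚ) 1 0 * (r.unop : Matrix (Fin 2) (Fin 2) ℚ) 0 1 +
          (A : Matrix (Fin 2) (Fin 2) ℚ) 1 1 * (r.unop : Matrix (Fin 2) (Fin 2) ℚ) 1 1 := by
        simp [Matrix.mul_apply, Fin.sum_univ_two]
      rw [this, A.2.1, zero_mul, zero_add]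
      exact (Zloc q hq).mul_mem hA2 hr.2.2

/-- The uniserial module `U = R/L`. -/
abbrev Umod (p q : ℕ) (hp : p.Prime) (hq : q.Prime) :=
  TriRing p q hp hq ⧸ Lideal p q hp hq

lemma Zloc_mem_or_inv_mem (p : ℕ) (hp : p.Prime) (x : ℚ) :
    x ∈ Zloc p hp ∨ x⁻¹ ∈ Zloc p hp := by
  by_cases hd : (p : ℤ) ∣ (x.den : ℤ)
  · right
    have hpd : p ∣ x.den := Int.ofNat_dvd.mp hd
    have hx : x ≠ 0 := by
      rintro rfl
      simp at hpd
      exact hp.one_lt.ne' hpd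
    refine ⟨x.den, x.num, ?_, ?_⟩
    · intro h
      have hpn : p ∣ x.num.natAbs := by
        have := Int.natAbs_dvd_natAbs.mpr h
        simpa using this
      have := Nat.Coprime.eq_one_of_dvd (Nat.Coprime.coprime_dvd_left hpn x.reduced) hpd
      exact hp.one_lt.ne' this
    · have hnum : (x.num : ℚ) ≠ 0 := by exact_mod_cast Rat.num_ne_zero.mpr hx
      field_simp
      exact_mod_cast (Rat.mul_den_eq_num x).symm
  · left
    exact ⟨x.num, x.den, hd, by exact_mod_cast Rat.mul_den_eq_num x⟩

lemma Zloc_div_mem_or (p : ℕ) (hp : p.Prime) (x y : ℚ) :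
    x / y ∈ Zloc p hp ∨ y / x ∈ Zloc p hp := by
  rcases Zloc_mem_or_inv_mem p hp (x / y) with h | h
  · exact Or.inl h
  · right
    rcases eq_or_ne x 0 with rfl | hx
    · simpa using (Zloc p hp).zero_mem
    · rwa [div_eq_mul_inv, mul_inv, inv_inv, mul_comm, ← div_eq_mul_inv] at h

def mkTri (p q : ℕ) (hp : p.Prime) (hq : q.Prime) (c x' b' : ℚ)
    (hc : c ∈ Zloc p hp) (hb' : b' ∈ Zloc q hq) : TriRing p q hp hq :=
  ⟨!![c, x'; 0, b'], by
    refine ⟨?_, ?_, ?_⟩ <;> simp [hc, hb']⟩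

lemma mk_mem_span (p q : ℕ) (hp : p.Prime) (hq : q.Prime) (A B : TriRing p q hp hq)
    (c x' b' : ℚ) (hc : c ∈ Zloc p hp) (hb' : b' ∈ Zloc q hq)
    (h00 : (B : Matrix (Fin 2) (Fin 2) ℚ) 0 0 * c = (A : Matrix (Fin 2) (Fin 2) ℚ) 0 0)
    (h01 : (B : Matrix (Fin 2) (Fin 2) ℚ) 0 0 * x' + (B : Matrix (Fin 2) (Fin 2) ℚ) 0 1 * b'
      - (A : Matrix (Fin 2) (Fin 2) ℚ) 0 1 ∈ Zloc q hq) :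
    (Submodule.Quotient.mk A : Umod p q hp hq) ∈
      Submodule.span (TriRing p q hp hq)ᵐᵒᵖ
        {(Submodule.Quotient.mk B : Umod p q hp hq)} := by
  rw [Submodule.mem_span_singleton]
  refine ⟨MulOpposite.op (mkTri p q hp hq c x' b' hc hb'), ?_⟩
  rw [← Submodule.Quotient.mk_smul, Submodule.Quotient.eq]
  have hsmul : ((MulOpposite.op (mkTri p q hp hq c x' b' hc hb') • B :
      TriRing p q hp hq) : Matrix (Fin 2) (Fin 2) ℚ) =
      (B : Matrix (Fin 2) (Fin 2) ℚ) * !![c, x'; 0, b'] := rfl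
  refine ⟨?_, ?_, ?_⟩
  · show ((_ : TriRing p q hp hq) : Matrix (Fin 2) (Fin 2) ℚ) 0 0 = 0
    rw [AddSubgroupClass.coe_sub, Matrix.sub_apply, hsmul]
    simp [Matrix.mul_apply, Fin.sum_univ_two, h00]
  · show ((_ : TriRing p q hp hq) : Matrix (Fin 2) (Fin 2) ℚ) 0 1 ∈ Zloc q hq
    rw [AddSubgroupClass.coe_sub, Matrix.sub_apply, hsmul]
    have : ((B : Matrix (Fin 2) (Fin 2) ℚ) * !![c, x'; 0, b']) 0 1 =
        (B : Matrix (Fin 2) (Fin 2) ℚ) 0 0 * x' + (B : Matrix (Fin 2) (Fin 2) ℚ) 0 1 * b' := by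
      simp [Matrix.mul_apply, Fin.sum_univ_two]
    rw [this]
    exact h01
  · show ((_ : TriRing p q hp hq) : Matrix (Fin 2) (Fin 2) ℚ) 1 1 ∈ Zloc q hq
    rw [AddSubgroupClass.coe_sub, Matrix.sub_apply, hsmul]
    have : ((B : Matrix (Fin 2) (Fin 2) ℚ) * !![c, x'; 0, b']) 1 1 =
        (B : Matrix (Fin 2) (Fin 2) ℚ) 1 0 * x' + (B : Matrix (Fin 2) (Fin 2) ℚ) 1 1 * b' := by
      simp [Matrix.mul_apply, Fin.sum_univ_two]
    rw [this, B.2.1, zero_mul, zero_add]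
    exact (Zloc q hq).sub_mem ((Zloc q hq).mul_mem B.2.2.2 hb') A.2.2.2

lemma key_compare (p q : ℕ) (hp : p.Prime) (hq : q.Prime) (u v : Umod p q hp hq) :
    u ∈ Submodule.span (TriRing p q hp hq)ᵐᵒᵖ {v} ∨
    v ∈ Submodule.span (TriRing p q hp hq)ᵐᵒᵖ {u} := by
  obtain ⟨A, rfl⟩ := Submodule.Quotient.mk_surjective _ u
  obtain ⟨B, rfl⟩ := Submodule.Quotient.mk_surjective _ v
  by_cases hb : (B : Matrix (Fin 2) (Fin 2) ℚ) 0 0 = 0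
  · by_cases ha : (A : Matrix (Fin 2) (Fin 2) ℚ) 0 0 = 0
    · by_cases hξ : (A : Matrix (Fin 2) (Fin 2) ℚ) 0 1 = 0
      · left
        refine mk_mem_span p q hp hq A B 0 0 0 (Zloc p hp).zero_mem (Zloc q hq).zero_mem ?_ ?_
        · rw [ha, hb, mul_zero]
        · have h0 : (B : Matrix (Fin 2) (Fin 2) ℚ) 0 0 * 0 +
              (B : Matrix (Fin 2) (Fin 2) ℚ) 0 1 * 0 - (A : Matrix (Fin 2) (Fin 2) ℚ) 0 1 = 0 := by
            rw [hξ]; ring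
          rw [h0]; exact (Zloc q hq).zero_mem
      · by_cases hη : (B : Matrix (Fin 2) (Fin 2) ℚ) 0 1 = 0
        · right
          refine mk_mem_span p q hp hq B A 0 0 0 (Zloc p hp).zero_mem (Zloc q hq).zero_mem ?_ ?_
          · rw [ha, hb, mul_zero]
          · have h0 : (A : Matrix (Fin 2) (Fin 2) ℚ) 0 0 * 0 +
                (A : Matrix (Fin 2) (Fin 2) ℚ) 0 1 * 0 - (B : Matrix (Fin 2) (Fin 2) ℚ) 0 1 = 0 := by
              rw [hη]; ring
            rw [h0]; exact (Zloc q hq).zero_mem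
        · rcases Zloc_div_mem_or q hq ((A : Matrix (Fin 2) (Fin 2) ℚ) 0 1)
              ((B : Matrix (Fin 2) (Fin 2) ℚ) 0 1) with h | h
          · left
            refine mk_mem_span p q hp hq A B 0 0 _ (Zloc p hp).zero_mem h ?_ ?_
            · rw [ha, hb, mul_zero]
            · have h0 : (B : Matrix (Fin 2) (Fin 2) ℚ) 0 0 * 0 +
                  (B : Matrix (Fin 2) (Fin 2) ℚ) 0 1 *
                    ((A : Matrix (Fin 2) (Fin 2) ℚ) 0 1 / (B : Matrix (Fin 2) (Fin 2) ℚ) 0 1) -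
                  (A : Matrix (Fin 2) (Fin 2) ℚ) 0 1 = 0 := by
                field_simp; ring
              rw [h0]; exact (Zloc q hq).zero_mem
          · right
            refine mk_mem_span p q hp hq B A 0 0 _ (Zloc p hp).zero_mem h ?_ ?_
            · rw [ha, hb, mul_zero]
            · have h0 : (A : Matrix (Fin 2) (Fin 2) ℚ) 0 0 * 0 +
                  (A : Matrix (Fin 2) (Fin 2) ℚ) 0 1 *
                    ((B : Matrix (Fin 2) (Fin 2) ℚ) 0 1 / (A : Matrix (Fin 2) (Fin 2) ℚ) 0 1) -
                  (B : Matrix (Fin 2) (Fin 2) ℚ) 0 1 = 0 := by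
                field_simp; ring
              rw [h0]; exact (Zloc q hq).zero_mem
    · right
      refine mk_mem_span p q hp hq B A 0
        ((B : Matrix (Fin 2) (Fin 2) ℚ) 0 1 / (A : Matrix (Fin 2) (Fin 2) ℚ) 0 0) 0
        (Zloc p hp).zero_mem (Zloc q hq).zero_mem ?_ ?_
      · rw [hb, mul_zero]
      · have h0 : (A : Matrix (Fin 2) (Fin 2) ℚ) 0 0 *
            ((B : Matrix (Fin 2) (Fin 2) ℚ) 0 1 / (A : Matrix (Fin 2) (Fin 2) ℚ) 0 0) +
            (A : Matrix (Fin 2) (Fin 2) ℚ) 0 1 * 0 - (B : Matrix (Fin 2) (Fin 2) ℚ) 0 1 = 0 := by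
          field_simp; ring
        rw [h0]; exact (Zloc q hq).zero_mem
  · by_cases ha : (A : Matrix (Fin 2) (Fin 2) ℚ) 0 0 = 0
    · left
      refine mk_mem_span p q hp hq A B 0
        ((A : Matrix (Fin 2) (Fin 2) ℚ) 0 1 / (B : Matrix (Fin 2) (Fin 2) ℚ) 0 0) 0
        (Zloc p hp).zero_mem (Zloc q hq).zero_mem ?_ ?_
      · rw [ha, mul_zero]
      · have h0 : (B : Matrix (Fin 2) (Fin 2) ℚ) 0 0 *
            ((A : Matrix (Fin 2) (Fin 2) ℚ) 0 1 / (B : Matrix (Fin 2) (Fin 2) ℚ) 0 0) +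
            (B : Matrix (Fin 2) (Fin 2) ℚ) 0 1 * 0 - (A : Matrix (Fin 2) (Fin 2) ℚ) 0 1 = 0 := by
          field_simp; ring
        rw [h0]; exact (Zloc q hq).zero_mem
    · rcases Zloc_div_mem_or p hp ((A : Matrix (Fin 2) (Fin 2) ℚ) 0 0)
          ((B : Matrix (Fin 2) (Fin 2) ℚ) 0 0) with h | h
      · left
        refine mk_mem_span p q hp hq A B _
          ((A : Matrix (Fin 2) (Fin 2) ℚ) 0 1 / (B : Matrix (Fin 2) (Fin 2) ℚ) 0 0) 0
          h (Zloc q hq).zero_mem ?_ ?_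
        · field_simp
        · have h0 : (B : Matrix (Fin 2) (Fin 2) ℚ) 0 0 *
              ((A : Matrix (Fin 2) (Fin 2) ℚ) 0 1 / (B : Matrix (Fin 2) (Fin 2) ℚ) 0 0) +
              (B : Matrix (Fin 2) (Fin 2) ℚ) 0 1 * 0 - (A : Matrix (Fin 2) (Fin 2) ℚ) 0 1 = 0 := by
            field_simp; ring
          rw [h0]; exact (Zloc q hq).zero_mem
      · right
        refine mk_mem_span p q hp hq B A _
          ((B : Matrix (Fin 2) (Fin 2) ℚ) 0 1 / (A : Matrix (Fin 2) (Fin 2) ℚ) 0 0) 0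
          h (Zloc q hq).zero_mem ?_ ?_
        · field_simp
        · have h0 : (A : Matrix (Fin 2) (Fin 2) ℚ) 0 0 *
              ((B : Matrix (Fin 2) (Fin 2) ℚ) 0 1 / (A : Matrix (Fin 2) (Fin 2) ℚ) 0 0) +
              (A : Matrix (Fin 2) (Fin 2) ℚ) 0 1 * 0 - (B : Matrix (Fin 2) (Fin 2) ℚ) 0 1 = 0 := by
            field_simp; ring
          rw [h0]; exact (Zloc q hq).zero_mem

/-- For distinct primes `p`, `q`, the right `R`-module `U = R/L` is uniserial, where
`R = [[ℤ_(p), ℚ], [0, ℤ_(q)]]` and `L = [[0, ℤ_(q)], [0, ℤ_(q)]]`. -/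
theorem stmt_13 (p q : ℕ) (hp : p.Prime) (hq : q.Prime) (hpq : p ≠ q) :
    IsUniserialModule (TriRing p q hp hq)ᵐᵒᵖ (Umod p q hp hq) := by
  intro N M
  by_cases h : N ≤ M
  · exact Or.inl h
  · right
    obtain ⟨u, huN, huM⟩ : ∃ u, u ∈ N ∧ u ∉ M := by
      by_contra h'
      push_neg at h'
      exact h fun x hx => h' x hx
    intro v hv
    rcases key_compare p q hp hq u v with hk | hk
    · exact absurd (Submodule.span_le.mpr (Set.singleton_subset_iff.mpr hv) hk) huM
    · exact Submodule.span_le.mpr (Set.singleton_subset_iff.mpr huN) hk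
end

section
/- Let p and q be two distinct prime numbers, let ℤ_(p) and ℤ_(q) be the localizations of ℤ at p and q respectively, let R be the ring of matrices [[a, x],[0, b]] with a ∈ ℤ_(p), x ∈ ℚ, b ∈ ℤ_(q), let L be the right ideal of R consisting of matrices [[0, x],[0, y]] with x, y ∈ ℤ_(q), and let U = R/L as a right R-module. Then the endomorphism ring End_R(U) is not a local ring. -/
/-- For distinct primes `p`, `q`, the endomorphism ring of the right `R`-module `U = R/L`
is not local, where `R = [[ℤ_(p), ℚ], [0, ℤ_(q)]]` and `L = [[0, ℤ_(q)], [0, ℤ_(q)]]`. -/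
theorem stmt_14 (p q : ℕ) (hp : p.Prime) (hq : q.Prime) (hpq : p ≠ q) :
    ¬ IsLocalRing (Module.End (TriRing p q hp hq)ᵐᵒᵖ (Umod p q hp hq)) := by

  intro hloc
  -- Bezout: a*p + b*q = 1
  have hcop : IsCoprime (p : ℤ) (q : ℤ) := by
    rw [Int.isCoprime_iff_gcd_eq_one]
    exact_mod_cast (Nat.coprime_primes hp hq).mpr hpq
  obtain ⟨a, b, hab⟩ := hcop
  set R := TriRing p q hp hq
  set L := Lideal p q hp hq
  set E := Module.End Rᵐᵒᵖ (Umod p q hp hq)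
  set f : E := (b * q : ℤ) • (1 : E) with hf
  set g : E := (a * p : ℤ) • (1 : E) with hg
  have hb0 : b ≠ 0 := by
    rintro rfl
    simp only [zero_mul, add_zero] at hab
    have : (p : ℤ) ∣ 1 := Dvd.intro a (by linarith)
    exact (Nat.prime_iff_prime_int.mp hp).not_dvd_one this
  have hfg : f + g = 1 := by
    rw [hf, hg, ← add_smul]
    have : b * (q : ℤ) + a * p = 1 := by linarith
    rw [this, one_smul]
  have := hloc.isUnit_or_isUnit_of_add_one hfg
  rcases this with hu | hu
  · -- f = (b*q) • 1 is not injective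
    have hinj : Function.Injective f := (Module.End.isUnit_iff f).mp hu |>.injective
    -- witness matrix W = [[0, 1/(b*q)],[0,0]]
    have hbq : ((b : ℚ) * q) ≠ 0 := by
      have : (q : ℚ) ≠ 0 := Nat.cast_ne_zero.mpr hq.ne_zero
      exact mul_ne_zero (Int.cast_ne_zero.mpr hb0) this
    set M : Matrix (Fin 2) (Fin 2) ℚ := !![0, 1 / ((b : ℚ) * q); 0, 0] with hM
    have hWmem : M ∈ R := by
      refine ⟨?_, ?_, ?_⟩
      · simp [hM]
      · simpa [hM] using (Zloc p hp).zero_mem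
      · simpa [hM] using (Zloc q hq).zero_mem
    set W : R := ⟨M, hWmem⟩ with hW
    set w : Umod p q hp hq := Submodule.Quotient.mk W with hw
    have hfw : f w = 0 := by
      have h1 : f w = Submodule.Quotient.mk ((b * q : ℤ) • W) := by
        rw [hf, hw]
        rw [LinearMap.smul_apply, Module.End.one_apply]
        exact (map_zsmul (Submodule.mkQ L) (b * q) W).symm
      rw [h1, Submodule.Quotient.mk_eq_zero]
      refine ⟨?_, ?_, ?_⟩
      · show (((b * q : ℤ) • W : R) : Matrix (Fin 2) (Fin 2) ℚ) 0 0 = 0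
        have : (((b * q : ℤ) • W : R) : Matrix (Fin 2) (Fin 2) ℚ) = (b * q : ℤ) • M := rfl
        rw [this, Matrix.smul_apply]
        simp [hM]
      · show (((b * q : ℤ) • W : R) : Matrix (Fin 2) (Fin 2) ℚ) 0 1 ∈ Zloc q hq
        have h2 : (((b * q : ℤ) • W : R) : Matrix (Fin 2) (Fin 2) ℚ) = (b * q : ℤ) • M := rfl
        have h3 : ((b * q : ℤ) • M) 0 1 = 1 := by
          rw [Matrix.smul_apply, zsmul_eq_mul]
          have hMe : M 0 1 = 1 / ((b : ℚ) * q) := by simp [hM]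
          rw [hMe]
          push_cast
          field_simp
          exact div_self (Nat.cast_ne_zero.mpr hq.ne_zero)
        rw [h2, h3]
        exact (Zloc q hq).one_mem
      · show (((b * q : ℤ) • W : R) : Matrix (Fin 2) (Fin 2) ℚ) 1 1 ∈ Zloc q hq
        have h2 : (((b * q : ℤ) • W : R) : Matrix (Fin 2) (Fin 2) ℚ) = (b * q : ℤ) • M := rfl
        rw [h2]
        simpa [hM] using (Zloc q hq).zero_mem
    have hw0 : w = 0 := hinj (by simpa using hfw)
    rw [hw, Submodule.Quotient.mk_eq_zero] at hw0
    obtain ⟨-, hW01, -⟩ := hw0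
    obtain ⟨n, d, hd, hnd⟩ := hW01
    have hMe : (W : Matrix (Fin 2) (Fin 2) ℚ) 0 1 = 1 / ((b : ℚ) * q) := by
      simp [hW, hM]
    rw [hMe] at hnd
    have : (d : ℚ) = (n * b * q : ℤ) := by
      push_cast
      field_simp at hnd ⊢
      rw [div_eq_iff (Nat.cast_ne_zero.mpr hq.ne_zero)] at hnd
      linarith
    have hdint : d = n * b * q := by exact_mod_cast this
    exact hd ⟨n * b, by linarith⟩
  · -- g = (a*p) • 1 is not surjective
    have hsurj : Function.Surjective g := (Module.End.isUnit_iff g).mp hu |>.surjective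
    obtain ⟨v, hv⟩ := hsurj (Submodule.Quotient.mk (1 : R))
    obtain ⟨A, rfl⟩ := Submodule.Quotient.mk_surjective L v
    have h1 : g (Submodule.Quotient.mk A) = Submodule.Quotient.mk ((a * p : ℤ) • A) := by
      rw [hg, LinearMap.smul_apply, Module.End.one_apply]
      exact (map_zsmul (Submodule.mkQ L) (a * p) A).symm
    rw [h1, Submodule.Quotient.eq] at hv
    obtain ⟨h00, -, -⟩ := hv
    have h2 : (((a * p : ℤ) • A - 1 : R) : Matrix (Fin 2) (Fin 2) ℚ) 0 0
        = (a * p : ℤ) • ((A : Matrix (Fin 2) (Fin 2) ℚ) 0 0) - 1 := by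
      have : (((a * p : ℤ) • A - 1 : R) : Matrix (Fin 2) (Fin 2) ℚ)
          = (a * p : ℤ) • (A : Matrix (Fin 2) (Fin 2) ℚ) - 1 := rfl
      rw [this, Matrix.sub_apply, Matrix.smul_apply, Matrix.one_apply_eq]
    rw [h2] at h00
    obtain ⟨n, d, hd, hnd⟩ := A.2.2.1
    have h3 : ((a : ℚ) * p) * ((A : Matrix (Fin 2) (Fin 2) ℚ) 0 0) = 1 := by
      have := h00
      rw [zsmul_eq_mul] at this
      push_cast at this
      linarith [this]
    have h4 : (d : ℚ) = (a * p * n : ℤ) := by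
      push_cast
      calc (d : ℚ) = ((a : ℚ) * p * ((A : Matrix (Fin 2) (Fin 2) ℚ) 0 0)) * d := by
            rw [h3]; ring
        _ = (a : ℚ) * p * (((A : Matrix (Fin 2) (Fin 2) ℚ) 0 0) * d) := by ring
        _ = (a : ℚ) * p * n := by rw [hnd]
    have hdint : d = a * p * n := by exact_mod_cast h4
    exact hd ⟨a * n, by linarith⟩
end
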